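/- arXiv:1803.08224 — 2 statements merged into one kernel-verified Lean document; each statement's English description precedes it below -/
import Mathlib

section
/- Let K ⊆ ℝ^n be a convex body with barycenter at the origin and volume 1. Then M_{1/2}(K) is centrally symmetric, i.e., M_{1/2}(K) = -M_{1/2}(K). -/
open MeasureTheory Metric Set
open scoped RealInnerProductSpace ENNReal Topology Pointwise

noncomputable def metronoid {n : ℕ} (μ : Measure (EuclideanSpace ℝ (Fin n))) :
    Set (EuclideanSpace ℝ (Fin n)) :=
  {z | ∃ f : EuclideanSpace ℝ (Fin n) → ℝ,
    (∀ y, 0 ≤ f y ∧ f y ≤ 1) ∧ Integrable f μ ∧ (∫ y, f y ∂μ) = 1 ∧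
    Integrable (fun y => f y • y) μ ∧ z = ∫ y, f y • y ∂μ}

/-- The Ulam floating body `M_δ(K)`. -/
noncomputable def ulam {n : ℕ} (K : Set (EuclideanSpace ℝ (Fin n))) (δ : ℝ) :
    Set (EuclideanSpace ℝ (Fin n)) :=
  metronoid ((volume.restrict K).withDensity fun _ => ENNReal.ofReal (1 / δ))

/-- If `K` is a convex body with barycenter `0` and volume `1`, then `M_{1/2}(K)`
is centrally symmetric. -/
theorem stmt2 (n : ℕ) (K : Set (EuclideanSpace ℝ (Fin n)))
    (hK : IsCompact K) (hKc : Convex ℝ K) (hKi : (interior K).Nonempty)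
    (hvol : volume K = 1) (hbar : (∫ x in K, x) = 0) :
    ulam K (1 / 2) = -ulam K (1 / 2) := by
  have hμeq : ((volume.restrict K).withDensity fun _ => ENNReal.ofReal (1 / (1 / 2 : ℝ)))
      = (2 : ℝ≥0∞) • volume.restrict K := by
    rw [MeasureTheory.withDensity_const]
    norm_num
  set μ := (2 : ℝ≥0∞) • volume.restrict K with hμ
  have hμuniv : μ Set.univ = 2 := by
    simp [hμ, Measure.restrict_apply_univ, hvol, mul_comm]
  haveI : IsFiniteMeasure μ := ⟨by rw [hμuniv]; exact (by norm_num)⟩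
  have hid : Integrable (fun y : EuclideanSpace ℝ (Fin n) => y) μ := by
    refine Integrable.smul_measure ?_ (by norm_num)
    exact continuous_id.continuousOn.integrableOn_compact hK
  have hbary : (∫ y, y ∂μ) = 0 := by
    rw [hμ, integral_smul_measure]
    simp [hbar]
  have key : ∀ z ∈ metronoid μ, -z ∈ metronoid μ := by
    rintro z ⟨f, h01, hInt, hsum, hIntv, rfl⟩
    refine ⟨fun y => 1 - f y, fun y => ⟨by simpa using sub_nonneg.2 (h01 y).2, by simpa using sub_le_self 1 (h01 y).1⟩,
      (integrable_const 1).sub hInt, ?_, ?_, ?_⟩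
    · rw [integral_sub (integrable_const 1) hInt, hsum, integral_const, measureReal_def, hμuniv]
      norm_num
    · have h : (fun y : EuclideanSpace ℝ (Fin n) => (1 - f y) • y)
          = fun y => y - f y • y := by
        funext y; rw [sub_smul, one_smul]
      rw [h]; exact hid.sub hIntv
    · have h : (fun y : EuclideanSpace ℝ (Fin n) => (1 - f y) • y)
          = fun y => y - f y • y := by
        funext y; rw [sub_smul, one_smul]
      rw [h, integral_sub hid hIntv, hbary, zero_sub]
  ext z
  simp only [Set.mem_neg]
  show z ∈ metronoid _ ↔ -z ∈ metronoid _
  rw [hμeq]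
  constructor
  · exact key z
  · intro h
    simpa using key (-z) h
end

section
/- Let h(ρ,δ) denote the height of a cap of the Euclidean ball ρB₂ⁿ ⊆ ℝ^n of volume δ. Then lim_{δ→0⁺} h(ρ,δ)/δ^{2/(n+1)} = (1/2)·((n+1)/|B₂^{n-1}|)^{2/(n+1)}·ρ^{-(n-1)/(n+1)}. -/
open MeasureTheory Metric Set
open scoped Topology

open Filter in
private lemma cap_aux (κ α ρ : ℝ) (hκ : 0 < κ) (hα : 0 ≤ α) (hρ : 0 < ρ)
    (h : ℝ → ℝ) (δ₀ : ℝ) (hδ₀ : 0 < δ₀)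
    (hcap : ∀ δ ∈ Set.Ioo (0:ℝ) δ₀, 0 < h δ ∧ h δ ≤ 2*ρ ∧
      κ * ∫ t in (0:ℝ)..(h δ), (t * (2*ρ - t)) ^ α = δ) :
    Filter.Tendsto (fun δ => h δ / δ ^ (1/(α+1))) (𝓝[>] (0:ℝ))
      (𝓝 (((α+1)/(κ*(2*ρ)^α)) ^ (1/(α+1)))) := by
  set β := α + 1 with hβdef
  have hβ : 0 < β := by positivity
  -- continuity of integrands
  have cont1 : Continuous (fun t : ℝ => (t * (2*ρ - t)) ^ α) := by
    apply Continuous.rpow_const (by continuity) (fun x => Or.inr hα)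
  have cont2 : ∀ c : ℝ, Continuous (fun t : ℝ => c * t ^ α) := fun c => by
    apply Continuous.mul continuous_const
    exact Continuous.rpow_const continuous_id (fun x => Or.inr hα)
  -- basic integral
  have hint : ∀ c x : ℝ, ∫ t in (0:ℝ)..x, c * t ^ α = c * (x ^ β / β) := by
    intro c x
    rw [intervalIntegral.integral_const_mul, integral_rpow (Or.inl (by linarith))]
    rw [Real.zero_rpow hβ.ne', sub_zero]
  -- bounds on the cap integral
  have hub : ∀ x : ℝ, 0 ≤ x → x ≤ 2*ρ →
      (∫ t in (0:ℝ)..x, (t * (2*ρ - t)) ^ α) ≤ (2*ρ) ^ α * (x ^ β / β) := by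
    intro x hx hx2
    rw [← hint]
    refine intervalIntegral.integral_mono_on hx (cont1.intervalIntegrable _ _)
      ((cont2 _).intervalIntegrable _ _) (fun t ht => ?_)
    rw [← Real.mul_rpow (by linarith) ht.1, mul_comm ((2:ℝ)*ρ) t]
    exact Real.rpow_le_rpow (by nlinarith [ht.1, ht.2] : (0:ℝ) ≤ t * (2*ρ - t))
      (by nlinarith [ht.1, ht.2]) hα
  have hlb : ∀ x : ℝ, 0 ≤ x → x ≤ 2*ρ →
      (2*ρ - x) ^ α * (x ^ β / β) ≤ ∫ t in (0:ℝ)..x, (t * (2*ρ - t)) ^ α := by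
    intro x hx hx2
    rw [← hint]
    refine intervalIntegral.integral_mono_on hx ((cont2 _).intervalIntegrable _ _)
      (cont1.intervalIntegrable _ _) (fun t ht => ?_)
    rw [← Real.mul_rpow (by linarith) ht.1, mul_comm ((2:ℝ)*ρ - x) t]
    exact Real.rpow_le_rpow (by nlinarith [ht.1, ht.2]) (by nlinarith [ht.1, ht.2]) hα
  -- lower bound via min
  have hmin : ∀ δ ∈ Set.Ioo (0:ℝ) δ₀, κ * (ρ ^ α * ((min (h δ) ρ) ^ β / β)) ≤ δ := by
    intro δ hδ
    obtain ⟨h1, h2, h3⟩ := hcap δ hδ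
    set m := min (h δ) ρ with hm
    have hm0 : 0 ≤ m := le_min h1.le hρ.le
    have hmρ : m ≤ ρ := min_le_right _ _
    have hmh : m ≤ h δ := min_le_left _ _
    have step1 : ρ ^ α * (m ^ β / β) ≤ ∫ t in (0:ℝ)..m, (t * (2*ρ - t)) ^ α := by
      rw [← hint]
      refine intervalIntegral.integral_mono_on hm0 ((cont2 _).intervalIntegrable _ _)
        (cont1.intervalIntegrable _ _) (fun t ht => ?_)
      rw [← Real.mul_rpow hρ.le ht.1, mul_comm ρ t]
      exact Real.rpow_le_rpow (by nlinarith [ht.1, ht.2]) (by nlinarith [ht.1, ht.2]) hα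
    have step2 : (∫ t in (0:ℝ)..m, (t * (2*ρ - t)) ^ α) ≤
        ∫ t in (0:ℝ)..(h δ), (t * (2*ρ - t)) ^ α := by
      refine intervalIntegral.integral_mono_interval le_rfl hm0 hmh ?_
        (cont1.intervalIntegrable _ _)
      filter_upwards [ae_restrict_mem measurableSet_Ioc] with t ht
      exact Real.rpow_nonneg (by nlinarith [ht.1, ht.2]) _
    calc κ * (ρ ^ α * (m ^ β / β)) ≤ κ * ∫ t in (0:ℝ)..(h δ), (t * (2*ρ - t)) ^ α := by
          exact mul_le_mul_of_nonneg_left (step1.trans step2) hκ.le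
      _ = δ := h3
  -- threshold below which h δ < ρ
  set ε₁ := min δ₀ (κ * (ρ ^ α * (ρ ^ β / β))) with hε₁def
  have hε₁ : 0 < ε₁ := lt_min hδ₀ (by positivity)
  have hsmall : ∀ δ ∈ Set.Ioo (0:ℝ) ε₁, h δ < ρ ∧ (h δ) ^ β ≤ δ * β / (κ * ρ ^ α) := by
    intro δ hδ
    have hδ' : δ ∈ Set.Ioo (0:ℝ) δ₀ := ⟨hδ.1, lt_of_lt_of_le hδ.2 (min_le_left _ _)⟩
    obtain ⟨h1, h2, h3⟩ := hcap δ hδ'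
    have key := hmin δ hδ'
    have hlt : min (h δ) ρ < ρ := by
      by_contra hcon
      push_neg at hcon
      have : ρ ≤ min (h δ) ρ := hcon
      have hρm : ρ ^ β ≤ (min (h δ) ρ) ^ β := Real.rpow_le_rpow hρ.le this hβ.le
      have : κ * (ρ ^ α * (ρ ^ β / β)) ≤ δ := by
        refine le_trans ?_ key
        gcongr
      have := lt_of_lt_of_le hδ.2 (min_le_right δ₀ _)
      linarith
    have hhρ : h δ < ρ := by
      rcases min_lt_iff.mp hlt with h' | h'
      · exact h'
      · exact absurd h' (lt_irrefl _)
    have hmeq : min (h δ) ρ = h δ := min_eq_left hhρ.le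
    rw [hmeq] at key
    constructor
    · exact hhρ
    · rw [le_div_iff₀ (by positivity)]
      have hβ0 : β ≠ 0 := hβ.ne'
      calc (h δ) ^ β * (κ * ρ ^ α) = κ * (ρ ^ α * ((h δ) ^ β / β)) * β := by
            field_simp
        _ ≤ δ * β := mul_le_mul_of_nonneg_right key hβ.le
  -- h tends to 0
  have hto0 : Tendsto h (𝓝[>] (0:ℝ)) (𝓝 0) := by
    have hmem : Set.Ioo (0:ℝ) ε₁ ∈ 𝓝[>] (0:ℝ) :=
      Ioo_mem_nhdsGT_of_mem ⟨le_refl 0, hε₁⟩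
    have t2 : Tendsto (fun δ : ℝ => (δ * β / (κ * ρ ^ α)) ^ (1/β)) (𝓝[>] (0:ℝ)) (𝓝 0) := by
      have t1 : Tendsto (fun δ : ℝ => δ * β / (κ * ρ ^ α)) (𝓝[>] (0:ℝ)) (𝓝 0) := by
        have hc : Continuous (fun δ : ℝ => δ * β / (κ * ρ ^ α)) := by continuity
        have t0 : Tendsto (fun δ : ℝ => δ * β / (κ * ρ ^ α)) (𝓝 0) (𝓝 0) := by
          simpa using hc.tendsto 0
        exact t0.mono_left nhdsWithin_le_nhds
      have t2' := t1.rpow_const (Or.inr (by positivity : (0:ℝ) ≤ 1/β))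
      rwa [Real.zero_rpow (by positivity : (1:ℝ)/β ≠ 0)] at t2'
    refine tendsto_of_tendsto_of_tendsto_of_le_of_le' tendsto_const_nhds t2 ?_ ?_
    · filter_upwards [hmem] with δ hδ
      exact (hcap δ ⟨hδ.1, lt_of_lt_of_le hδ.2 (min_le_left _ _)⟩).1.le
    · filter_upwards [hmem] with δ hδ
      obtain ⟨hhρ, hpow⟩ := hsmall δ hδ
      have h1 := (hcap δ ⟨hδ.1, lt_of_lt_of_le hδ.2 (min_le_left _ _)⟩).1
      have := Real.rpow_le_rpow (Real.rpow_nonneg h1.le β) hpow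
        (by positivity : (0:ℝ) ≤ 1/β)
      rwa [← Real.rpow_mul h1.le, mul_one_div, div_self hβ.ne', Real.rpow_one] at this
  -- main squeeze for g δ = h δ ^ β / δ
  set A := β / (κ * (2*ρ) ^ α) with hAdef
  have hA : 0 < A := by
    have := Real.rpow_pos_of_pos (by linarith : (0:ℝ) < 2*ρ) α
    positivity
  have hg : Tendsto (fun δ => (h δ) ^ β / δ) (𝓝[>] (0:ℝ)) (𝓝 A) := by
    have hmem : Set.Ioo (0:ℝ) ε₁ ∈ 𝓝[>] (0:ℝ) :=
      Ioo_mem_nhdsGT_of_mem ⟨le_refl 0, hε₁⟩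
    have hupt : Tendsto (fun δ => β / (κ * (2*ρ - h δ) ^ α)) (𝓝[>] (0:ℝ)) (𝓝 A) := by
      have t1 : Tendsto (fun δ => 2*ρ - h δ) (𝓝[>] (0:ℝ)) (𝓝 (2*ρ)) := by
        have := hto0.const_sub (2*ρ)
        simpa using this
      have t2 := t1.rpow_const (p := α) (Or.inl (by positivity : (2:ℝ)*ρ ≠ 0))
      have t3 : Tendsto (fun δ => κ * (2*ρ - h δ) ^ α) (𝓝[>] (0:ℝ))
          (𝓝 (κ * (2*ρ) ^ α)) := tendsto_const_nhds.mul t2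
      exact tendsto_const_nhds.div t3 (by positivity : κ * (2*ρ) ^ α ≠ 0)
    refine tendsto_of_tendsto_of_tendsto_of_le_of_le' tendsto_const_nhds hupt ?_ ?_
    · -- A ≤ g δ
      filter_upwards [hmem] with δ hδ
      have hδ' : δ ∈ Set.Ioo (0:ℝ) δ₀ := ⟨hδ.1, lt_of_lt_of_le hδ.2 (min_le_left _ _)⟩
      obtain ⟨h1, h2, h3⟩ := hcap δ hδ'
      have hu := hub (h δ) h1.le h2
      have hδle : δ ≤ κ * ((2*ρ) ^ α * ((h δ) ^ β / β)) := by
        have := mul_le_mul_of_nonneg_left hu hκ.le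
        rwa [h3] at this
      rw [hAdef, div_le_div_iff₀ (by positivity) hδ.1]
      have hβ0 : β ≠ 0 := hβ.ne'
      calc β * δ ≤ β * (κ * ((2*ρ) ^ α * ((h δ) ^ β / β))) :=
            mul_le_mul_of_nonneg_left hδle hβ.le
        _ = (h δ) ^ β * (κ * (2*ρ) ^ α) := by field_simp
    · -- g δ ≤ upper
      filter_upwards [hmem] with δ hδ
      have hδ' : δ ∈ Set.Ioo (0:ℝ) δ₀ := ⟨hδ.1, lt_of_lt_of_le hδ.2 (min_le_left _ _)⟩
      obtain ⟨h1, h2, h3⟩ := hcap δ hδ'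
      obtain ⟨hhρ, _⟩ := hsmall δ hδ
      have hl := hlb (h δ) h1.le h2
      have hδge : κ * ((2*ρ - h δ) ^ α * ((h δ) ^ β / β)) ≤ δ := by
        have := mul_le_mul_of_nonneg_left hl hκ.le
        rwa [h3] at this
      have hden : (0:ℝ) < (2*ρ - h δ) ^ α :=
        Real.rpow_pos_of_pos (by linarith) α
      rw [div_le_div_iff₀ hδ.1 (by positivity)]
      have hβ0 : β ≠ 0 := hβ.ne'
      calc (h δ) ^ β * (κ * (2*ρ - h δ) ^ α)
            = κ * ((2*ρ - h δ) ^ α * ((h δ) ^ β / β)) * β := by field_simp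
        _ ≤ δ * β := mul_le_mul_of_nonneg_right hδge hβ.le
        _ = β * δ := mul_comm _ _
  -- conclude
  have hfinal := hg.rpow_const (p := 1/β) (Or.inl hA.ne')
  refine Filter.Tendsto.congr' ?_ hfinal
  filter_upwards [Ioo_mem_nhdsGT_of_mem (⟨le_refl 0, hε₁⟩ : (0:ℝ) ∈ Set.Ico 0 ε₁)]
    with δ hδ
  have h1 := (hcap δ ⟨hδ.1, lt_of_lt_of_le hδ.2 (min_le_left _ _)⟩).1
  rw [Real.div_rpow (Real.rpow_nonneg h1.le β) hδ.1.le, ← Real.rpow_mul h1.le,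
    mul_one_div, div_self hβ.ne', Real.rpow_one]


/-- If `h δ` is the height of a cap of volume `δ` of the ball `ρB₂ⁿ ⊆ ℝⁿ`
(for all small `δ > 0`), then
`h(ρ,δ)/δ^{2/(n+1)} → (1/2)((n+1)/|B₂^{n-1}|)^{2/(n+1)} ρ^{-(n-1)/(n+1)}` as `δ → 0⁺`. -/
theorem stmt15 (n : ℕ) (hn : 1 ≤ n) (ρ : ℝ) (hρ : 0 < ρ)
    (h : ℝ → ℝ) (δ₀ : ℝ) (hδ₀ : 0 < δ₀)
    (hcap : ∀ δ ∈ Set.Ioo (0 : ℝ) δ₀, 0 < h δ ∧ h δ ≤ 2 * ρ ∧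
      (volume (Metric.ball (0 : EuclideanSpace ℝ (Fin (n - 1))) 1)).toReal *
        (∫ t in (0 : ℝ)..(h δ), (ρ ^ 2 - (ρ - t) ^ 2) ^ (((n : ℝ) - 1) / 2)) = δ) :
    Filter.Tendsto (fun δ : ℝ => h δ / δ ^ ((2 : ℝ) / (n + 1))) (𝓝[>] 0)
      (𝓝 ((1 / 2) *
        ((n + 1) / (volume (Metric.ball (0 : EuclideanSpace ℝ (Fin (n - 1))) 1)).toReal)
          ^ ((2 : ℝ) / (n + 1)) * ρ ^ (-(((n : ℝ) - 1) / (n + 1))))) := by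
  set κ := (volume (Metric.ball (0 : EuclideanSpace ℝ (Fin (n - 1))) 1)).toReal with hκdef
  have hκ : 0 < κ :=
    ENNReal.toReal_pos (ne_of_gt (Metric.measure_ball_pos _ _ one_pos)) measure_ball_lt_top.ne
  have hn1 : (1:ℝ) ≤ (n:ℝ) := by exact_mod_cast hn
  set α : ℝ := ((n:ℝ) - 1)/2 with hαdef
  have hα : 0 ≤ α := by rw [hαdef]; linarith
  have hm1 : (0:ℝ) < (n:ℝ) + 1 := by linarith
  have hβ : (0:ℝ) < α + 1 := by linarith
  have hcap' : ∀ δ ∈ Set.Ioo (0:ℝ) δ₀, 0 < h δ ∧ h δ ≤ 2*ρ ∧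
      κ * ∫ t in (0:ℝ)..(h δ), (t * (2*ρ - t)) ^ α = δ := by
    intro δ hδ
    obtain ⟨h1, h2, h3⟩ := hcap δ hδ
    refine ⟨h1, h2, ?_⟩
    rw [show (∫ t in (0:ℝ)..(h δ), (t * (2*ρ - t)) ^ α)
        = ∫ t in (0:ℝ)..(h δ), (ρ ^ 2 - (ρ - t) ^ 2) ^ α from
      intervalIntegral.integral_congr (fun t _ => by norm_num; congr 1 <;> ring)]
    exact h3
  have main := cap_aux κ α ρ hκ hα hρ h δ₀ hδ₀ hcap'
  have hexp : 1/(α+1) = (2:ℝ)/((n:ℝ)+1) := by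
    rw [hαdef, show ((n:ℝ)-1)/2 + 1 = ((n:ℝ)+1)/2 by ring, one_div_div]
  have hconst : ((α+1)/(κ*(2*ρ)^α)) ^ (1/(α+1))
      = 1/2 * (((n:ℝ)+1)/κ) ^ ((2:ℝ)/((n:ℝ)+1)) * ρ ^ (-(((n:ℝ)-1)/((n:ℝ)+1))) := by
    have p1 : ((2:ℝ))^α ≠ 0 := (Real.rpow_pos_of_pos two_pos α).ne'
    have p2 : ρ^α ≠ 0 := (Real.rpow_pos_of_pos hρ α).ne'
    have p3 : κ ≠ 0 := hκ.ne'
    have hne : ((n:ℝ)+1) ≠ 0 := hm1.ne'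
    have hne' : (1:ℝ)+(n:ℝ) ≠ 0 := by intro hc; rw [add_comm] at hc; exact hne hc
    have e2 : (α+1)/(κ*(2*ρ)^α)
        = (((n:ℝ)+1)/κ) * ((2:ℝ)^(-(α+1)) * ρ^(-α)) := by
      rw [Real.mul_rpow (by norm_num : (0:ℝ) ≤ 2) hρ.le,
        Real.rpow_neg (by norm_num : (0:ℝ) ≤ 2), Real.rpow_neg hρ.le,
        show (2:ℝ)^(α+1) = 2^α * 2 from Real.rpow_add_one (by norm_num) α,
        show α + 1 = ((n:ℝ)+1)/2 by rw [hαdef]; ring]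
      field_simp
    rw [e2, Real.mul_rpow (div_nonneg (by positivity) hκ.le)
        (mul_nonneg (Real.rpow_nonneg (by norm_num) _) (Real.rpow_nonneg hρ.le _)),
      Real.mul_rpow (Real.rpow_nonneg (by norm_num) _) (Real.rpow_nonneg hρ.le _),
      ← Real.rpow_mul (by norm_num : (0:ℝ) ≤ 2), ← Real.rpow_mul hρ.le,
      show -(α+1) * (1/(α+1)) = -1 by
        rw [neg_mul, mul_one_div, div_self hβ.ne'],
      show -α * (1/(α+1)) = -(((n:ℝ)-1)/((n:ℝ)+1)) by
        rw [show α + 1 = ((n:ℝ)+1)/2 by rw [hαdef]; ring, one_div_div, hαdef,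
          neg_mul, div_mul_div_comm, mul_comm ((n:ℝ)-1) 2,
          mul_div_mul_left _ _ (two_ne_zero)],
      Real.rpow_neg_one, hexp]
    ring
  rw [show (fun δ : ℝ => h δ / δ ^ ((2:ℝ)/((n:ℝ)+1))) = fun δ => h δ / δ ^ (1/(α+1)) from
    funext fun δ => by rw [hexp]]
  rw [← hconst]
  exact main
end
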